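/- Let k be a commutative ring and let n be a natural number. Consider the monoid algebra k[H_{n+1}] of the hyperoctahedral group H_{n+1} and the augmentation map ε : k[H_{n+1}] → k, the k-algebra homomorphism sending every group element to 1. Then the kernel of ε equals the k-submodule of k[H_{n+1}] spanned by the set of differences {[g] - [g * w_{p,q,r}] : g ∈ H_{n+1}, p + q + r = n + 1}, where [h] denotes the basis element of the monoid algebra corresponding to h and * is the group multiplication. (This is the exactness, at the middle term, of the sequence 0 ← k ← k[Hom_{ΔH}([n],[0])] ← k[Hom_{ΔH}([n],[2])] used to compute degree-zero hyperoctahedral homology, under the identification of Hom_{ΔH}([n],[0]) with H_{n+1}.) -/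

import Mathlib

/-- The action of permutations on sign vectors, permuting the coordinates. -/
def signPermAction (m : ℕ) :
    Equiv.Perm (Fin m) →* MulAut (Fin m → Multiplicative (ZMod 2)) where
  toFun σ := MulEquiv.arrowCongr σ (MulEquiv.refl (Multiplicative (ZMod 2)))
  map_one' := by ext f i; rfl
  map_mul' σ τ := by ext f i; rfl

/-- The hyperoctahedral group `H_{n+1} = C₂^{n+1} ⋊ Σ_{n+1}`, realized as the group of
signed permutations of `Fin (n+1)`. -/
abbrev HyperoctahedralGroup (n : ℕ) : Type :=
  (Fin (n + 1) → Multiplicative (ZMod 2)) ⋊[signPermAction (n + 1)] Equiv.Perm (Fin (n + 1))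

/-- The underlying permutation of the block-flip element `w_{p,q,r}`: the first block of
size `p` moves to the end, the middle block of size `q` is reversed, and the last block of
size `r` moves to the front. -/
def blockFlipPerm (n p q r : ℕ) (h : p + q + r = n + 1) : Equiv.Perm (Fin (n + 1)) :=
  (finCongr h.symm).trans <|
    (finSumFinEquiv (m := p + q) (n := r)).symm.trans <|
      ((finSumFinEquiv (m := p) (n := q)).symm.sumCongr (Equiv.refl (Fin r))).trans <|
        (Equiv.sumComm (Fin p ⊕ Fin q) (Fin r)).trans <|
          ((Equiv.refl (Fin r)).sumCongr
              (((Equiv.refl (Fin p)).sumCongr (Fin.revPerm (n := q))).trans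
                (Equiv.sumComm (Fin p) (Fin q)))).trans <|
            ((Equiv.refl (Fin r)).sumCongr (finSumFinEquiv (m := q) (n := p))).trans <|
              (finSumFinEquiv (m := r) (n := q + p)).trans
                (finCongr (by omega : r + (q + p) = n + 1))

/-- The block-flip element `w_{p,q,r}` of the hyperoctahedral group: its sign component is
nontrivial exactly at the `q` middle-block positions `p, …, p + q - 1`, and its underlying
permutation is `blockFlipPerm`. -/
def blockFlip (n p q r : ℕ) (h : p + q + r = n + 1) : HyperoctahedralGroup n :=
  ⟨fun i => if p ≤ (i : ℕ) ∧ (i : ℕ) < p + q then Multiplicative.ofAdd (1 : ZMod 2) else 1,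
    blockFlipPerm n p q r h⟩

namespace HOAux

open Fin.NatCast

lemma mod_helper {m a b : ℕ} (hb : b < m) (h : a = b ∨ a = m + b) : a % m = b := by
  rcases h with h | h
  · rw [h, Nat.mod_eq_of_lt hb]
  · rw [h, Nat.add_mod_left, Nat.mod_eq_of_lt hb]

lemma blockFlipPerm_apply_val (n p q r : ℕ) (h : p + q + r = n + 1) (i : Fin (n+1)) :
    ((blockFlipPerm n p q r h) i : ℕ) =
      if (i:ℕ) < p then r + q + i
      else if (i:ℕ) < p + q then r + (p + q - 1 - i)
      else (i:ℕ) - (p + q) := by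
  have hi := i.isLt
  unfold blockFlipPerm
  rcases lt_or_ge (i:ℕ) p with h1 | h1
  · have e1 : finCongr h.symm i = Fin.castAdd r (Fin.castAdd q ⟨(i:ℕ), h1⟩) := by
      ext; simp
    rw [Equiv.trans_apply, e1]
    simp only [Equiv.trans_apply, finSumFinEquiv_symm_apply_castAdd,
      finSumFinEquiv_symm_apply_natAdd, Equiv.sumCongr_apply, Sum.map_inl, Sum.map_inr,
      Equiv.sumComm_apply, Sum.swap_inl, Sum.swap_inr, Equiv.refl_apply,
      finSumFinEquiv_apply_left, finSumFinEquiv_apply_right, finCongr_apply, Fin.coe_cast,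
      Fin.coe_castAdd, Fin.coe_natAdd, Fin.revPerm_apply, Fin.val_rev, h1, if_pos]
    omega
  · rcases lt_or_ge (i:ℕ) (p+q) with h2 | h2
    · have e1 : finCongr h.symm i = Fin.castAdd r (Fin.natAdd p ⟨(i:ℕ)-p, by omega⟩) := by
        ext; simp; omega
      rw [Equiv.trans_apply, e1]
      simp only [Equiv.trans_apply, finSumFinEquiv_symm_apply_castAdd,
        finSumFinEquiv_symm_apply_natAdd, Equiv.sumCongr_apply, Sum.map_inl, Sum.map_inr,
        Equiv.sumComm_apply, Sum.swap_inl, Sum.swap_inr, Equiv.refl_apply,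
        finSumFinEquiv_apply_left, finSumFinEquiv_apply_right, finCongr_apply, Fin.coe_cast,
        Fin.coe_castAdd, Fin.coe_natAdd, Fin.revPerm_apply, Fin.val_rev]
      rw [if_neg (by omega), if_pos h2]
      omega
    · have e1 : finCongr h.symm i = Fin.natAdd (p+q) ⟨(i:ℕ)-(p+q), by omega⟩ := by
        ext; simp; omega
      rw [Equiv.trans_apply, e1]
      simp only [Equiv.trans_apply, finSumFinEquiv_symm_apply_castAdd,
        finSumFinEquiv_symm_apply_natAdd, Equiv.sumCongr_apply, Sum.map_inl, Sum.map_inr,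
        Equiv.sumComm_apply, Sum.swap_inl, Sum.swap_inr, Equiv.refl_apply,
        finSumFinEquiv_apply_left, finSumFinEquiv_apply_right, finCongr_apply, Fin.coe_cast,
        Fin.coe_castAdd, Fin.coe_natAdd, Fin.revPerm_apply, Fin.val_rev]
      rw [if_neg (by omega), if_neg (by omega)]

variable {n : ℕ}

lemma addLeft_val (a : ℕ) (x : Fin (n+1)) :
    ((Equiv.addLeft ((a : Fin (n+1))) x : Fin (n+1)) : ℕ) = (a + x) % (n+1) := by
  show (((a : Fin (n+1)) + x : Fin (n+1)) : ℕ) = _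
  rw [Fin.val_add, Fin.val_natCast, Nat.mod_add_mod]

lemma blockFlipPerm_q_zero (p r : ℕ) (h : p + 0 + r = n + 1) :
    blockFlipPerm n p 0 r h = Equiv.addLeft ((r : Fin (n+1))) := by
  apply Equiv.ext; intro i
  apply Fin.ext
  rw [blockFlipPerm_apply_val, addLeft_val]
  have hi := i.isLt
  rcases lt_or_ge (i:ℕ) p with h1 | h1
  · rw [if_pos h1]
    exact (mod_helper (by omega) (Or.inl (by omega))).symm
  · rw [if_neg (by omega), if_neg (by omega)]
    exact (mod_helper (by omega) (Or.inr (by omega))).symm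

lemma blockFlipPerm_q_one (p r : ℕ) (h : p + 1 + r = n + 1) (i : Fin (n+1)) :
    ((blockFlipPerm n p 1 r h) i : ℕ) =
      if (i:ℕ) < p then r + 1 + i else if (i:ℕ) = p then r else (i:ℕ) - (p+1) := by
  rw [blockFlipPerm_apply_val]
  have hi := i.isLt
  rcases lt_or_ge (i:ℕ) p with h1 | h1
  · rw [if_pos h1, if_pos h1]
  · rcases eq_or_lt_of_le h1 with h2 | h2
    · rw [if_neg (by omega), if_pos (by omega), if_neg (by omega), if_pos h2.symm]
      omega
    · rw [if_neg (by omega), if_neg (by omega), if_neg (by omega), if_neg (by omega)]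

/-! ### Generation -/

open SemidirectProduct

def W (n : ℕ) : Set (HyperoctahedralGroup n) :=
  {w | ∃ p q r : ℕ, ∃ h : p + q + r = n + 1, w = blockFlip n p q r h}

abbrev C (n : ℕ) : Subgroup (HyperoctahedralGroup n) := Subgroup.closure (W n)

lemma blockFlip_mem (p q r : ℕ) (h : p + q + r = n + 1) : blockFlip n p q r h ∈ C n :=
  Subgroup.subset_closure ⟨p, q, r, h, rfl⟩

lemma rot_mem (a : Fin (n+1)) :
    (inr (Equiv.addLeft a) : HyperoctahedralGroup n) ∈ C n := by
  have ha := a.isLt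
  have h : (n + 1 - (a:ℕ)) + 0 + (a:ℕ) = n + 1 := by omega
  have e : blockFlip n (n + 1 - (a:ℕ)) 0 (a:ℕ) h = inr (Equiv.addLeft a) := by
    refine SemidirectProduct.ext ?_ ?_
    · funext i
      show (if n + 1 - (a:ℕ) ≤ (i:ℕ) ∧ (i:ℕ) < n + 1 - (a:ℕ) + 0 then
        Multiplicative.ofAdd (1 : ZMod 2) else 1) = _
      rw [if_neg (by omega)]
      rfl
    · show blockFlipPerm n _ 0 _ h = (inr (Equiv.addLeft a)).right
      rw [blockFlipPerm_q_zero, Fin.cast_val_eq_self]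
      rfl
  rw [← e]; exact blockFlip_mem _ _ _ _

def flip (j : Fin (n+1)) : HyperoctahedralGroup n :=
  inl (Pi.mulSingle j (Multiplicative.ofAdd (1 : ZMod 2)))

lemma signPermAction_mulSingle (σ : Equiv.Perm (Fin (n+1))) (i : Fin (n+1))
    (x : Multiplicative (ZMod 2)) :
    signPermAction (n+1) σ (Pi.mulSingle i x) = Pi.mulSingle (σ i) x := by
  funext j
  have e0 : ((signPermAction (n+1)) σ) (Pi.mulSingle i x) j =
      Pi.mulSingle (M := fun _ : Fin (n+1) => Multiplicative (ZMod 2)) i x (σ.symm j) := rfl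
  rw [e0]
  by_cases hj : j = σ i
  · subst hj; rw [Equiv.symm_apply_apply, Pi.mulSingle_eq_same, Pi.mulSingle_eq_same]
  · rw [Pi.mulSingle_eq_of_ne hj,
      Pi.mulSingle_eq_of_ne (show σ.symm j ≠ i from
        fun hc => hj (by rw [← hc, Equiv.apply_symm_apply]))]


lemma flip_zero_mem : (flip 0 : HyperoctahedralGroup n) ∈ C n := by
  have h : 0 + 1 + n = n + 1 := by omega
  have e : blockFlip n 0 1 n h = flip 0 * inr (Equiv.addLeft ((n : Fin (n+1)))) := by
    rw [flip, ← mk_eq_inl_mul_inr]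
    refine SemidirectProduct.ext ?_ ?_
    · funext i
      show (if 0 ≤ (i:ℕ) ∧ (i:ℕ) < 0 + 1 then Multiplicative.ofAdd (1 : ZMod 2) else 1) =
        Pi.mulSingle (M := fun _ : Fin (n+1) => Multiplicative (ZMod 2)) 0
          (Multiplicative.ofAdd (1 : ZMod 2)) i
      by_cases hi : i = 0
      · subst hi; rw [if_pos (by simp), Pi.mulSingle_eq_same]
      · have hiv : (i:ℕ) ≠ 0 := by intro hc; exact hi (Fin.ext (by rw [hc, Fin.val_zero]))
        rw [if_neg (by omega), Pi.mulSingle_eq_of_ne hi]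
    · show blockFlipPerm n 0 1 n h = Equiv.addLeft ((n : Fin (n+1)))
      apply Equiv.ext; intro i
      apply Fin.ext
      rw [blockFlipPerm_q_one, addLeft_val]
      have hi := i.isLt
      by_cases hi0 : (i:ℕ) = 0
      · rw [if_neg (by omega), if_pos hi0]
        exact (mod_helper (by omega) (Or.inl (by omega))).symm
      · rw [if_neg (by omega), if_neg hi0]
        exact (mod_helper (by omega) (Or.inr (by omega))).symm
  have : flip 0 = blockFlip n 0 1 n h * (inr (Equiv.addLeft ((n : Fin (n+1)))) : HyperoctahedralGroup n)⁻¹ := by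
    rw [e, mul_inv_cancel_right]
  rw [this]
  exact mul_mem (blockFlip_mem _ _ _ _) (inv_mem (rot_mem _))

lemma flip_mem (j : Fin (n+1)) : (flip j : HyperoctahedralGroup n) ∈ C n := by
  have e : flip j = inr (Equiv.addLeft j) * flip 0 * inr ((Equiv.addLeft j)⁻¹) := by
    rw [flip, flip, ← inl_aut, signPermAction_mulSingle]
    simp
  rw [e]
  refine mul_mem (mul_mem (rot_mem _) flip_zero_mem) ?_
  rw [map_inv]
  exact inv_mem (rot_mem _)

lemma inl_mem (ε : Fin (n+1) → Multiplicative (ZMod 2)) :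
    (inl ε : HyperoctahedralGroup n) ∈ C n := by
  rw [← Finset.univ_prod_mulSingle ε]
  refine Finset.prod_induction _ (fun x => (inl x : HyperoctahedralGroup n) ∈ C n)
    (fun a b ha hb => by show (inl (a * b) : HyperoctahedralGroup n) ∈ C n
                         rw [map_mul]; exact mul_mem ha hb)
    (by show (inl 1 : HyperoctahedralGroup n) ∈ C n
        rw [map_one]; exact one_mem _) (fun i _ => ?_)
  have hx : ∀ x : Multiplicative (ZMod 2), x = 1 ∨ x = Multiplicative.ofAdd 1 := by decide
  show (inl (Pi.mulSingle i (ε i)) : HyperoctahedralGroup n) ∈ C n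
  rcases hx (ε i) with h | h
  · rw [h]
    have : Pi.mulSingle (M := fun _ : Fin (n+1) => Multiplicative (ZMod 2)) i 1 = 1 :=
      Pi.mulSingle_one i
    rw [this, map_one]; exact one_mem _
  · rw [h]; exact flip_mem i


lemma inr_blockFlipPerm_mem (p q r : ℕ) (h : p + q + r = n + 1) :
    (inr (blockFlipPerm n p q r h) : HyperoctahedralGroup n) ∈ C n := by
  have e : (inr (blockFlipPerm n p q r h) : HyperoctahedralGroup n) =
      (inl (blockFlip n p q r h).left)⁻¹ * blockFlip n p q r h :=
    calc (inr (blockFlipPerm n p q r h) : HyperoctahedralGroup n)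
        = (inl (blockFlip n p q r h).left)⁻¹ *
            (inl (blockFlip n p q r h).left * inr (blockFlip n p q r h).right) := by
          rw [inv_mul_cancel_left]; rfl
      _ = (inl (blockFlip n p q r h).left)⁻¹ * blockFlip n p q r h := by
          rw [inl_left_mul_inr_right]
  rw [e]
  exact mul_mem (inv_mem (inl_mem _)) (blockFlip_mem _ _ _ _)

lemma swap_val (p : ℕ) (hp1 : 1 ≤ p) (hpn : p ≤ n) (x : Fin (n+1)) :
    ((Equiv.swap (0 : Fin (n+1)) ((p : Fin (n+1))) x : Fin (n+1)) : ℕ) =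
      if (x:ℕ) = 0 then p else if (x:ℕ) = p then 0 else x := by
  have hpF : (((p : Fin (n+1))) : ℕ) = p := by
    rw [Fin.val_natCast]; exact Nat.mod_eq_of_lt (by omega)
  by_cases hx0 : x = (0 : Fin (n+1))
  · subst hx0
    rw [Equiv.swap_apply_left]
    simp [hpF]
  · have hx0' : (x:ℕ) ≠ 0 := by
      intro hc; exact hx0 (Fin.ext (by simpa using hc))
    by_cases hxp : x = ((p : Fin (n+1)))
    · subst hxp
      rw [Equiv.swap_apply_right]
      simp only [Fin.val_zero, hpF]
      rw [if_neg (show ¬(p = 0) by omega)]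
      simp
    · have hxp' : (x:ℕ) ≠ p := by
        intro hc; exact hxp (Fin.ext (by rw [hpF]; exact hc))
      rw [Equiv.swap_apply_of_ne_of_ne hx0 hxp, if_neg hx0', if_neg hxp']

lemma inr_swap_zero_mem (p : ℕ) (hp1 : 1 ≤ p) (hpn : p ≤ n) :
    (inr (Equiv.swap (0 : Fin (n+1)) ((p : Fin (n+1)))) : HyperoctahedralGroup n) ∈ C n := by
  have h2 : p + 1 + (n - p) = n + 1 := by omega
  have h1 : (p - 1) + 1 + (n - p + 1) = n + 1 := by omega
  have hE : Equiv.addLeft (((n - p : ℕ) : Fin (n+1))) *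
      Equiv.swap (0 : Fin (n+1)) ((p : Fin (n+1))) *
      Equiv.addLeft (((p : ℕ) : Fin (n+1))) * blockFlipPerm n (p-1) 1 (n-p+1) h1 =
      blockFlipPerm n p 1 (n-p) h2 := by
    apply Equiv.ext; intro i
    apply Fin.ext
    have hi := i.isLt
    rw [Equiv.Perm.mul_apply, Equiv.Perm.mul_apply, Equiv.Perm.mul_apply,
      addLeft_val, swap_val p hp1 hpn, addLeft_val, blockFlipPerm_q_one,
      blockFlipPerm_q_one]
    rcases Nat.lt_or_ge (i:ℕ) (p-1) with hA | hge
    · rw [if_pos hA,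
        show (p + (n - p + 1 + 1 + (i:ℕ))) % (n+1) = (i:ℕ) + 1 from
          mod_helper (by omega) (Or.inr (by omega)),
        if_neg (by omega), if_neg (by omega), if_pos (show (i:ℕ) < p by omega),
        show (n - p + ((i:ℕ) + 1)) % (n+1) = n - p + 1 + (i:ℕ) from
          mod_helper (by omega) (Or.inl (by omega))]
    · rcases Nat.eq_or_lt_of_le hge with hB | hgt
      · rw [if_neg (show ¬((i:ℕ) < p - 1) by omega),
          if_pos (show (i:ℕ) = p - 1 from hB.symm),
          show (p + (n - p + 1)) % (n+1) = 0 from mod_helper (by omega) (Or.inr (by omega)),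
          if_pos (show (0:ℕ) = 0 from rfl), if_pos (show (i:ℕ) < p by omega),
          show (n - p + p) % (n+1) = n from mod_helper (by omega) (Or.inl (by omega))]
        omega
      · rcases Nat.eq_or_lt_of_le hgt with hC | hD
        · have hCi : (i:ℕ) = p := by omega
          rw [if_neg (show ¬((i:ℕ) < p - 1) by omega),
            if_neg (show ¬((i:ℕ) = p - 1) by omega),
            show (p + ((i:ℕ) - (p - 1 + 1))) % (n+1) = p from
              mod_helper (by omega) (Or.inl (by omega)),
            if_neg (show ¬(p = 0) by omega), if_pos (show p = p from rfl),
            if_neg (show ¬((i:ℕ) < p) by omega), if_pos hCi,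
            show (n - p + 0) % (n+1) = n - p from mod_helper (by omega) (Or.inl (by omega))]
        · have hDi : p < (i:ℕ) := by omega
          rw [if_neg (show ¬((i:ℕ) < p - 1) by omega),
            if_neg (show ¬((i:ℕ) = p - 1) by omega),
            show (p + ((i:ℕ) - (p - 1 + 1))) % (n+1) = (i:ℕ) from
              mod_helper (by omega) (Or.inl (by omega)),
            if_neg (show ¬((i:ℕ) = 0) by omega), if_neg (show ¬((i:ℕ) = p) by omega),
            show (n - p + (i:ℕ)) % (n+1) = (i:ℕ) - (p + 1) from
              mod_helper (by omega) (Or.inr (by omega)),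
            if_neg (show ¬((i:ℕ) < p) by omega), if_neg (show ¬((i:ℕ) = p) by omega)]
  have hS : Equiv.swap (0 : Fin (n+1)) ((p : Fin (n+1))) =
      (Equiv.addLeft (((n - p : ℕ) : Fin (n+1))))⁻¹ * (blockFlipPerm n p 1 (n-p) h2 *
        ((blockFlipPerm n (p-1) 1 (n-p+1) h1)⁻¹ *
          (Equiv.addLeft (((p : ℕ) : Fin (n+1))))⁻¹)) := by
    rw [← hE]; group
  rw [hS, map_mul, map_mul, map_mul, map_inv, map_inv, map_inv]
  exact mul_mem (inv_mem (rot_mem _))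
    (mul_mem (inr_blockFlipPerm_mem _ _ _ _)
      (mul_mem (inv_mem (inr_blockFlipPerm_mem _ _ _ _)) (inv_mem (rot_mem _))))

lemma inr_perm_mem (σ : Equiv.Perm (Fin (n+1))) :
    (inr σ : HyperoctahedralGroup n) ∈ C n := by
  have hsw : ∀ x y : Fin (n+1), x ≠ y → (inr (Equiv.swap x y) : HyperoctahedralGroup n) ∈ C n := by
    intro x y hxy
    have hd : y - x ≠ 0 := sub_ne_zero.2 hxy.symm
    have hd1 : 1 ≤ ((y - x : Fin (n+1)) : ℕ) := by
      rcases Nat.eq_zero_or_pos ((y - x : Fin (n+1)) : ℕ) with h | h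
      · exact absurd (Fin.ext (by simpa using h)) hd
      · omega
    have hdn : ((y - x : Fin (n+1)) : ℕ) ≤ n := by
      have := (y - x).isLt; omega
    have e : Equiv.swap x y = Equiv.addLeft x *
        Equiv.swap (0 : Fin (n+1)) (((((y - x : Fin (n+1)) : ℕ)) : Fin (n+1))) *
        (Equiv.addLeft x)⁻¹ := by
      rw [Fin.cast_val_eq_self (y - x), ← Equiv.swap_apply_apply]
      have e1 : Equiv.addLeft x 0 = x := by simp
      have e2 : Equiv.addLeft x (y - x) = y := by
        show x + (y - x) = y
        exact add_sub_cancel x y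
      rw [e1, e2]
    rw [e, map_mul, map_mul, map_inv]
    exact mul_mem (mul_mem (rot_mem _) (inr_swap_zero_mem _ hd1 hdn)) (inv_mem (rot_mem _))
  have hle : Subgroup.closure {τ : Equiv.Perm (Fin (n+1)) | τ.IsSwap} ≤
      (C n).comap (inr : Equiv.Perm (Fin (n+1)) →* HyperoctahedralGroup n) := by
    rw [Subgroup.closure_le]
    rintro τ ⟨x, y, hxy, rfl⟩
    exact hsw x y hxy
  rw [Equiv.Perm.closure_isSwap] at hle
  exact hle (Subgroup.mem_top σ)

lemma closure_eq_top : C n = ⊤ := by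
  rw [eq_top_iff]
  intro g _
  rw [← inl_left_mul_inr_right g]
  exact mul_mem (inl_mem _) (inr_perm_mem _)

end HOAux

/-- The kernel of the augmentation `ε : k[H_{n+1}] → k` is the `k`-submodule spanned by
the differences `[g] - [g * w_{p,q,r}]` for `g ∈ H_{n+1}` and `p + q + r = n + 1`. -/
theorem augmentation_ker_eq_span_blockFlip_differences
    (k : Type*) [CommRing k] (n : ℕ) :
    LinearMap.ker
        (MonoidAlgebra.lift k k (HyperoctahedralGroup n)
            (1 : HyperoctahedralGroup n →* k)).toLinearMap =
      Submodule.span k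
        {x : MonoidAlgebra k (HyperoctahedralGroup n) |
          ∃ (g : HyperoctahedralGroup n) (p q r : ℕ) (h : p + q + r = n + 1),
            x = MonoidAlgebra.of k (HyperoctahedralGroup n) g -
              MonoidAlgebra.of k (HyperoctahedralGroup n) (g * blockFlip n p q r h)} := by
  classical
  set S := Submodule.span k
        {x : MonoidAlgebra k (HyperoctahedralGroup n) |
          ∃ (g : HyperoctahedralGroup n) (p q r : ℕ) (h : p + q + r = n + 1),
            x = MonoidAlgebra.of k (HyperoctahedralGroup n) g -
              MonoidAlgebra.of k (HyperoctahedralGroup n) (g * blockFlip n p q r h)} with hS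
  have hT : ∀ h : HyperoctahedralGroup n, ∀ g : HyperoctahedralGroup n,
      MonoidAlgebra.of k (HyperoctahedralGroup n) g -
        MonoidAlgebra.of k (HyperoctahedralGroup n) (g * h) ∈ S := by
    intro h
    have hh : h ∈ HOAux.C n := by rw [HOAux.closure_eq_top]; trivial
    induction hh using Subgroup.closure_induction with
    | mem w hw =>
      obtain ⟨p, q, r, hpqr, rfl⟩ := hw
      intro g
      exact Submodule.subset_span ⟨g, p, q, r, hpqr, rfl⟩
    | one =>
      intro g
      simp only [mul_one, sub_self]
      exact zero_mem S
    | mul a b _ _ ha hb =>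
      intro g
      have h1 := ha g
      have h2 := hb (g * a)
      have := add_mem h1 h2
      rw [sub_add_sub_cancel] at this
      rwa [← mul_assoc]
    | inv a _ ha =>
      intro g
      have h1 := ha (g * a⁻¹)
      rw [mul_assoc, inv_mul_cancel, mul_one] at h1
      have := neg_mem h1
      rw [neg_sub] at this
      exact this
  have hone : ∀ g : HyperoctahedralGroup n,
      MonoidAlgebra.of k (HyperoctahedralGroup n) g -
        MonoidAlgebra.of k (HyperoctahedralGroup n) 1 ∈ S := by
    intro g
    have := hT g⁻¹ g
    rwa [mul_inv_cancel] at this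
  apply le_antisymm
  · intro x hx
    have hx' : (x.coeff.sum fun _ a => a) = 0 := by
      have hx2 := (LinearMap.mem_ker.mp hx)
      rw [AlgHom.toLinearMap_apply, MonoidAlgebra.lift_apply] at hx2
      simpa using hx2
    have hrepr : x = x.coeff.sum fun g a =>
        a • (MonoidAlgebra.of k (HyperoctahedralGroup n) g -
          MonoidAlgebra.of k (HyperoctahedralGroup n) 1) := by
      have e1 : (x.coeff.sum fun g a => a • MonoidAlgebra.of k (HyperoctahedralGroup n) g) = x := by
        conv_rhs => rw [← MonoidAlgebra.sum_coeff_single x]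
        refine Finsupp.sum_congr fun g _ => ?_
        rw [MonoidAlgebra.of_apply, MonoidAlgebra.smul_single', mul_one]
      have e2 : (x.coeff.sum fun _ a => a • MonoidAlgebra.of k (HyperoctahedralGroup n) 1) = 0 := by
        rw [Finsupp.sum, ← Finset.sum_smul]
        rw [Finsupp.sum] at hx'
        rw [hx', zero_smul]
      calc x = (x.coeff.sum fun g a => a • MonoidAlgebra.of k (HyperoctahedralGroup n) g) -
            (x.coeff.sum fun _ a => a • MonoidAlgebra.of k (HyperoctahedralGroup n) 1) := by
            rw [e1, e2, sub_zero]
        _ = _ := by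
            rw [← Finsupp.sum_sub]
            exact Finsupp.sum_congr fun g _ => (smul_sub _ _ _).symm
    rw [hrepr]
    exact Submodule.sum_mem S fun g _ => Submodule.smul_mem S _ (hone g)
  · rw [hS, Submodule.span_le]
    rintro x ⟨g, p, q, r, hpqr, rfl⟩
    rw [SetLike.mem_coe, LinearMap.mem_ker, AlgHom.toLinearMap_apply, map_sub,
      MonoidAlgebra.lift_of, MonoidAlgebra.lift_of]
    simp
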